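/- For q, r > 0, a ∈ ℝ, b ≠ 0, any solution P of the discrete algebraic Riccati equation P = a²P + q - (abP)²/(r + b²P) with P ≥ 0 satisfies P ≥ q > 0, and the closed-loop gain satisfies (a - bL)² < 1 where L = abP/(r + b²P), i.e., |a - bL| < 1. -/
import Mathlib


/-- Any nonnegative solution of the discrete algebraic Riccati equation satisfies
`P ≥ q > 0`, and the closed-loop gain `a - bL` with `L = abP/(r + b²P)` satisfies
`(a - bL)² < 1`, i.e. `|a - bL| < 1`. -/
theorem riccati_stability (q r a b P : ℝ) (hq : 0 < q) (hr : 0 < r) (hb : b ≠ 0)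
    (hP : 0 ≤ P)
    (hRic : P = a ^ 2 * P + q - (a * b * P) ^ 2 / (r + b ^ 2 * P)) :
    q ≤ P ∧ 0 < q ∧
      (a - b * (a * b * P / (r + b ^ 2 * P))) ^ 2 < 1 ∧
      |a - b * (a * b * P / (r + b ^ 2 * P))| < 1 := by
  have hD : 0 < r + b ^ 2 * P := by positivity
  have hD' : r + b ^ 2 * P ≠ 0 := ne_of_gt hD
  have key : P * (r + b ^ 2 * P) = a ^ 2 * r * P + q * (r + b ^ 2 * P) := by
    field_simp at hRic
    nlinarith [hRic]
  have hqP : q ≤ P := by nlinarith [mul_nonneg (mul_nonneg (sq_nonneg a) hr.le) hP, hD]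
  have hPpos : 0 < P := lt_of_lt_of_le hq hqP
  have hsq : (a - b * (a * b * P / (r + b ^ 2 * P))) ^ 2 < 1 := by
    have heq : a - b * (a * b * P / (r + b ^ 2 * P)) = a * r / (r + b ^ 2 * P) := by
      field_simp; ring
    rw [heq, div_pow, div_lt_one (by positivity)]
    -- a^2 * r^2 < (r + b^2 P)^2
    have h1 : a ^ 2 * r * P = (P - q) * (r + b ^ 2 * P) := by linarith
    nlinarith [sq_nonneg b, mul_pos hq hr, mul_pos hPpos hD, sq_nonneg (b*P)]
  refine ⟨hqP, hq, hsq, ?_⟩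
  have h1 := abs_nonneg (a - b * (a * b * P / (r + b ^ 2 * P)))
  have h2 := sq_abs (a - b * (a * b * P / (r + b ^ 2 * P)))
  nlinarith
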